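/- Let h > 0 and 0 < α < 2/(3h). For μ ≥ 0 let D(α, μ, h) be the 3×3 real matrix with rows ((1 − αh + μ)² + 2α²h², μ², −2μ(1 − αh + μ)²), (1, 0, 0), (1 − αh + μ, 0, −μ), and let A(α, μ, h) be the 2×2 real matrix with rows (1 − αh + μ, −μ) and (1, 0). Then there exists μ > 0 such that the spectral radius of D(α, μ, h) is strictly less than 1 and the spectral radius of A(α, μ, h) is strictly less than 1. -/

import Mathlib

/-- The spectral radius of a real square matrix: the maximum modulus of its complex
eigenvalues, i.e. the supremum of the moduli of the elements of the spectrum of the matrix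
viewed over `ℂ`. -/
noncomputable def specRad {n : Type*} [Fintype n] [DecidableEq n]
    (A : Matrix n n ℝ) : ℝ :=
  sSup ((fun z : ℂ => ‖z‖) '' spectrum ℂ (A.map (algebraMap ℝ ℂ)))

section Aux

attribute [local instance] Matrix.linftyOpNormedRing Matrix.linftyOpNormedAlgebra

/-- If a positive diagonal scaling makes all absolute row sums of `M` less than one,
then the spectral radius of `M` is less than one. -/
lemma specRad_lt_one_of_rowsums {n : Type*} [Fintype n] [DecidableEq n] [Nonempty n]
    (M : Matrix n n ℝ) (s : n → ℝ) (hs : ∀ i, 0 < s i)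
    (hb : ∀ i, ∑ j, s i * |M i j| / s j < 1) : specRad M < 1 := by
  classical
  set Mc := M.map (algebraMap ℝ ℂ) with hMc
  set c : n → ℂ := fun i => (s i : ℂ) with hcdef
  have hc : ∀ i, c i ≠ 0 := fun i => by
    simp [hcdef, (hs i).ne']
  have h1 : Matrix.diagonal c * Matrix.diagonal (fun i => (c i)⁻¹) = 1 := by
    rw [Matrix.diagonal_mul_diagonal]
    have : (fun i => c i * (c i)⁻¹) = fun _ => (1 : ℂ) :=
      funext fun i => mul_inv_cancel₀ (hc i)
    rw [this]
    exact Matrix.diagonal_one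
  have h2 : Matrix.diagonal (fun i => (c i)⁻¹) * Matrix.diagonal c = 1 := by
    rw [Matrix.diagonal_mul_diagonal]
    have : (fun i => (c i)⁻¹ * c i) = fun _ => (1 : ℂ) :=
      funext fun i => inv_mul_cancel₀ (hc i)
    rw [this]
    exact Matrix.diagonal_one
  set u : (Matrix n n ℂ)ˣ := ⟨Matrix.diagonal c, Matrix.diagonal (fun i => (c i)⁻¹), h1, h2⟩
    with hu
  set B : Matrix n n ℂ := (↑u : Matrix n n ℂ) * Mc * (↑u⁻¹ : Matrix n n ℂ) with hB
  have hBd : B = Matrix.diagonal c * Mc * Matrix.diagonal (fun i => (c i)⁻¹) := rfl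
  have hBij : ∀ i j, B i j = c i * Mc i j * (c j)⁻¹ := by
    intro i j
    rw [hBd]
    simp [Matrix.diagonal_mul, Matrix.mul_diagonal, mul_assoc]
  have hrow : ∀ i, ∑ j, ‖B i j‖ < 1 := by
    intro i
    have : ∀ j, ‖B i j‖ = s i * |M i j| / s j := by
      intro j
      rw [hBij i j]
      rw [norm_mul, norm_mul, norm_inv]
      simp [hcdef, hMc, Matrix.map_apply, Complex.norm_real, Real.norm_eq_abs,
        abs_of_pos (hs i), abs_of_pos (hs j), div_eq_mul_inv]
    rw [Finset.sum_congr rfl fun j _ => this j]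
    exact hb i
  have hnorm : ‖B‖ < 1 := by
    rw [Matrix.linfty_opNorm_def]
    have hsup : (Finset.univ.sup fun i : n => ∑ j, ‖B i j‖₊) < 1 := by
      rw [Finset.sup_lt_iff (by norm_num : (⊥ : NNReal) < 1)]
      intro i _
      have := hrow i
      rw [show (1 : NNReal) = ‖(1:ℝ)‖₊ by simp]
      rw [← NNReal.coe_lt_coe]
      push_cast [coe_nnnorm]
      simpa using this
    exact_mod_cast hsup
  have hspec : ∀ z ∈ spectrum ℂ Mc, ‖z‖ ≤ ‖B‖ := by
    intro z hz
    rw [← spectrum.units_conjugate (u := u)] at hz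
    have := spectrum.norm_le_norm_of_mem hz
    exact this
  refine lt_of_le_of_lt ?_ hnorm
  apply Real.sSup_le
  · rintro x ⟨z, hz, rfl⟩
    exact hspec z hz
  · exact norm_nonneg _

end Aux

/-- **Existence of a positive momentum keeping the Heavyball-IGT dynamics stable.** For `h > 0`
and `0 < α < 2/(3h)`, with
`D(α, μ, h) = [[(1-αh+μ)² + 2α²h², μ², -2μ(1-αh+μ)²], [1, 0, 0], [1-αh+μ, 0, -μ]]` and
`A(α, μ, h) = [[1-αh+μ, -μ], [1, 0]]`, there exists `μ > 0` such that both spectral radii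
are strictly less than `1`. -/
theorem heavyball_igt_exists_positive_momentum
    (h α : ℝ) (hh : 0 < h) (hα0 : 0 < α) (hα : α < 2 / (3 * h))
    (D : ℝ → Matrix (Fin 3) (Fin 3) ℝ)
    (hD : ∀ μ : ℝ, D μ = !![(1 - α * h + μ) ^ 2 + 2 * α ^ 2 * h ^ 2, μ ^ 2,
        -2 * μ * (1 - α * h + μ) ^ 2; 1, 0, 0; 1 - α * h + μ, 0, -μ])
    (A : ℝ → Matrix (Fin 2) (Fin 2) ℝ)
    (hA : ∀ μ : ℝ, A μ = !![1 - α * h + μ, -μ; 1, 0]) :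
    ∃ μ : ℝ, 0 < μ ∧ specRad (D μ) < 1 ∧ specRad (A μ) < 1 := by
  set t := α * h with htdef
  have ht0 : 0 < t := mul_pos hα0 hh
  have ht1 : t < 2 / 3 := by
    have h3 := (lt_div_iff₀ (by positivity : (0:ℝ) < 3 * h)).mp hα
    rw [htdef]
    nlinarith
  set μ := t * (2 - 3 * t) / 20 with hμdef
  have h20 : 20 * μ = 2 * t - 3 * t ^ 2 := by rw [hμdef]; ring
  have hμ0 : 0 < μ := by
    apply div_pos (mul_pos ht0 (by nlinarith)) (by norm_num)
  have hμt : μ ≤ t / 10 := by nlinarith [h20, sq_nonneg t]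
  have hμs : μ ≤ 1 / 60 := by nlinarith [h20, sq_nonneg (t - 1/3)]
  have hpos : 0 < 1 - t + μ := by nlinarith
  have row0 : (1 - t + μ) ^ 2 + 2 * t ^ 2 + 2 * μ ^ 2 + 2 * μ * (1 - t + μ) ^ 2 < 1 := by
    nlinarith [sq_nonneg (1 - t + μ), sq_nonneg μ, sq_nonneg t, mul_pos hμ0 hpos]
  have row2 : 1 - t + μ + μ < 1 := by nlinarith
  have rowA : 1 - t + μ + 2 * μ < 1 := by nlinarith
  have ht2 : α ^ 2 * h ^ 2 = t ^ 2 := by rw [htdef]; ring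
  refine ⟨μ, hμ0, ?_, ?_⟩
  · apply specRad_lt_one_of_rowsums (D μ) ![1, 1/2, 1]
    · intro i
      fin_cases i <;> norm_num
    · intro i
      rw [hD μ]
      fin_cases i <;>
        simp [Fin.sum_univ_three, Matrix.cons_val_zero, Matrix.cons_val_one, Matrix.head_cons]
      · rw [abs_of_nonneg (by positivity : (0:ℝ) ≤ (1 - t + μ) ^ 2 + 2 * α ^ 2 * h ^ 2),
          abs_of_pos hμ0]
        nlinarith [row0, ht2]
      · norm_num
      · rw [abs_of_pos hpos, abs_of_pos hμ0]
        nlinarith [row2]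
  · apply specRad_lt_one_of_rowsums (A μ) ![1, 1/2]
    · intro i
      fin_cases i <;> norm_num
    · intro i
      rw [hA μ]
      fin_cases i <;>
        simp [Fin.sum_univ_two, Matrix.cons_val_zero, Matrix.cons_val_one, Matrix.head_cons]
      · rw [abs_of_pos hpos, abs_of_pos hμ0]
        nlinarith [rowA]
      · norm_num
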